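/- For every x ∈ ℝⁿ₊, the natural residual satisfies r(x) = ‖R(x)‖_Λ ≤ √(2n·(f(x) − f(x⋆))), where x⋆ is any minimizer of f over ℝⁿ₊. -/

import Mathlib

open Finset

/-- For every `x ∈ ℝⁿ₊`, the natural residual satisfies
`r(x) = ‖R(x)‖_Λ ≤ √(2n·(f(x) − f(x⋆)))`, where `x⋆` is any minimizer of `f` over `ℝⁿ₊`,
`R(x) = x − max(x − Λ⁻¹∇f(x), 0)` and `‖v‖_Λ² = Σ_j ‖A_{:j}‖₂² v_j²`. -/
theorem residual_le_sqrt_gap {m n : ℕ} (hm : 0 < m) (hn : 0 < n)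
    (A : Matrix (Fin m) (Fin n) ℝ)
    (hA_nonneg : ∀ i j, 0 ≤ A i j)
    (hA_cols : ∀ j, ∃ i, A i j ≠ 0)
    (f : (Fin n → ℝ) → ℝ)
    (hf : ∀ x, f x = (1/2) * ∑ i, (A.mulVec x i)^2 - ∑ j, x j)
    (xstar : Fin n → ℝ)
    (hxs_nonneg : ∀ j, 0 ≤ xstar j)
    (hxs_min : ∀ x : Fin n → ℝ, (∀ j, 0 ≤ x j) → f xstar ≤ f x)
    (x : Fin n → ℝ) (hx : ∀ j, 0 ≤ x j)
    (R : Fin n → ℝ)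
    (hR : ∀ j, R j = x j -
      max (x j - ((∑ i, A i j * A.mulVec x i) - 1) / (∑ i, (A i j)^2)) 0) :
    Real.sqrt (∑ j, (∑ i, (A i j)^2) * (R j)^2) ≤
      Real.sqrt (2 * n * (f x - f xstar)) := by
  set g : Fin n → ℝ := fun j => (∑ i, A i j * A.mulVec x i) - 1 with hg
  set lam : Fin n → ℝ := fun j => ∑ i, (A i j)^2 with hlam
  have hlam_pos : ∀ j, 0 < lam j := by
    intro j
    obtain ⟨i, hi⟩ := hA_cols j
    exact Finset.sum_pos' (fun i _ => sq_nonneg _)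
      ⟨i, Finset.mem_univ i, by positivity⟩
  -- key per-coordinate bound
  have key : ∀ j, lam j * (R j)^2 ≤ 2 * (f x - f xstar) := by
    intro j
    set y : Fin n → ℝ := fun k => x k - (if k = j then R j else 0) with hy
    have hyj : y j = max (x j - g j / lam j) 0 := by
      simp [hy, hR j, hg, hlam]
    have hy_nonneg : ∀ k, 0 ≤ y k := by
      intro k
      by_cases hk : k = j
      · subst hk; rw [hyj]; exact le_max_right _ _
      · simp [hy, hk, hx k]
    have hmv : ∀ i, A.mulVec y i = A.mulVec x i - A i j * R j := by
      intro i
      simp [hy, Matrix.mulVec, dotProduct, mul_sub, Finset.sum_sub_distrib,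
        mul_ite, Finset.sum_ite_eq']
    have hsumy : ∑ k, y k = (∑ k, x k) - R j := by
      simp [hy, Finset.sum_sub_distrib, Finset.sum_ite_eq']
    have hfy : f y = f x - R j * g j + lam j * (R j)^2 / 2 := by
      rw [hf y, hf x]
      have e1 : ∀ i, (A.mulVec y i)^2
          = (A.mulVec x i)^2 - 2 * R j * (A i j * A.mulVec x i)
            + (R j)^2 * (A i j)^2 := by
        intro i; rw [hmv i]; ring
      rw [Finset.sum_congr rfl (fun i _ => e1 i), hsumy]
      rw [Finset.sum_add_distrib, Finset.sum_sub_distrib, ← Finset.mul_sum,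
        ← Finset.mul_sum]
      simp only [hg, hlam]
      ring
    have hstar : f xstar ≤ f y := hxs_min y hy_nonneg
    have hgR : lam j * (R j)^2 ≤ R j * g j := by
      have keyeq : ∀ G L : ℝ, L ≠ 0 → L * (G / L) ^ 2 = (G / L) * G := by
        intro G L hL; field_simp
      rcases le_or_gt 0 (x j - g j / lam j) with h | h
      · have hmax : max (x j - g j / lam j) 0 = x j - g j / lam j := max_eq_left h
        have hRj : R j = g j / lam j := by rw [hR j, hmax]; ring
        rw [hRj]
        exact le_of_eq (keyeq (g j) (lam j) (hlam_pos j).ne')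
      · have hmax : max (x j - g j / lam j) 0 = 0 := max_eq_right h.le
        have hRj : R j = x j := by rw [hR j, hmax]; ring
        have hxg : x j * lam j < g j :=
          (lt_div_iff₀ (hlam_pos j)).mp (by linarith : x j < g j / lam j)
        rw [hRj]
        have := mul_le_mul_of_nonneg_right hxg.le (hx j)
        calc lam j * (x j)^2 = x j * lam j * x j := by ring
          _ ≤ g j * x j := this
          _ = x j * g j := by ring
    -- combine
    have h2 : f xstar ≤ f x - R j * g j + lam j * (R j)^2 / 2 := hfy ▸ hstar
    have h3 : R j * g j - lam j * (R j)^2 / 2 ≤ f x - f xstar := by linarith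
    have habs : ∀ P Q G : ℝ, P ≤ Q → Q - P / 2 ≤ G → P ≤ 2 * G := by
      intro P Q G hPQ hQG; linarith
    exact habs _ _ _ hgR h3
  apply Real.sqrt_le_sqrt
  calc ∑ j, lam j * (R j)^2 ≤ ∑ _j : Fin n, 2 * (f x - f xstar) :=
        Finset.sum_le_sum (fun j _ => key j)
    _ = n * (2 * (f x - f xstar)) := by
        rw [Finset.sum_const, Finset.card_univ, Fintype.card_fin, nsmul_eq_mul]
    _ = 2 * n * (f x - f xstar) := by ring
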